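/- For every graph G, sqrt(p(G)) ≤ etw(G), where p(G) = max over blocks B of G of max(Δ_e(B), tw(B)). -/

import Mathlib

open Classical

/-- A finite loopless multigraph: a finite vertex type, a finite edge type, and an
endpoint function assigning to every edge an unordered pair of distinct vertices. -/
structure FinMGraph where
  V : Type
  E : Type
  [fV : Fintype V]
  [fE : Fintype E]
  [dV : DecidableEq V]
  ends : E → Sym2 V
  loopless : ∀ e, ¬ (ends e).IsDiag

attribute [instance] FinMGraph.fV FinMGraph.fE FinMGraph.dV

namespace FinMGraph

variable (G : FinMGraph)

/-- One-step adjacency inside the vertex set `S` (i.e. in the induced subgraph `G[S]`). -/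
def stepIn (S : Set G.V) (a b : G.V) : Prop :=
  a ∈ S ∧ b ∈ S ∧ ∃ e : G.E, G.ends e = s(a, b)

/-- The vertex set of the connected component of `v` in the induced subgraph `G[S]`. -/
def comp (S : Set G.V) (v : G.V) : Set G.V :=
  {w | Relation.ReflTransGen (G.stepIn S) v w}

/-- The number of edges (counted with multiplicity) with exactly one endpoint in `X`. -/
noncomputable def cut (X : Set G.V) : ℕ :=
  Nat.card {e : G.E // ∃ a b, G.ends e = s(a, b) ∧ a ∈ X ∧ b ∉ X}

/-- For a layout `L` (a linear ordering of the vertices) the set `S_i` of vertices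
occurring at position `i` or later. -/
def tail (L : Fin (Fintype.card G.V) ≃ G.V) (i : Fin (Fintype.card G.V)) : Set G.V :=
  {v | i ≤ L.symm v}

/-- The cost `δ^ec(i) = |E_G(C_G(S_i, x_i))|` of position `i` in the layout `L`. -/
noncomputable def cost (L : Fin (Fintype.card G.V) ≃ G.V) (i : Fin (Fintype.card G.V)) : ℕ :=
  G.cut (G.comp (G.tail L i) (L i))

/-- The edge-treewidth of `G`: the minimum over all layouts of the maximum cost. -/
noncomputable def etw : ℕ :=
  sInf {k | ∃ L : Fin (Fintype.card G.V) ≃ G.V, ∀ i, G.cost L i ≤ k}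

end FinMGraph

namespace FinMGraph

variable (G : FinMGraph)

/-- `G` is a forest: every edge is a bridge, i.e. after removing an edge its two
endpoints are no longer connected. -/
def IsForest : Prop :=
  ∀ (e : G.E) (a b : G.V), G.ends e = s(a, b) →
    ¬ Relation.ReflTransGen (fun x y => ∃ f : G.E, f ≠ e ∧ G.ends f = s(x, y)) a b

/-- A cycle of length `k` in `G`, given by an injective cyclic sequence of vertices and an
injective sequence of distinct edges joining consecutive vertices. -/
def IsCycleOn (k : ℕ) (v : ZMod k → G.V) (f : ZMod k → G.E) : Prop :=
  2 ≤ k ∧ Function.Injective v ∧ Function.Injective f ∧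
    ∀ i : ZMod k, G.ends (f i) = s(v i, v (i + 1))

/-- `G` is a cactus: every edge belongs to at most one cycle, i.e. any two cycles
sharing an edge have the same edge set. -/
def IsCactus : Prop :=
  ∀ (k₁ : ℕ) (v₁ : ZMod k₁ → G.V) (f₁ : ZMod k₁ → G.E)
    (k₂ : ℕ) (v₂ : ZMod k₂ → G.V) (f₂ : ZMod k₂ → G.E),
    G.IsCycleOn k₁ v₁ f₁ → G.IsCycleOn k₂ v₂ f₂ →
    (∃ e, e ∈ Set.range f₁ ∧ e ∈ Set.range f₂) → Set.range f₁ = Set.range f₂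

/-- A walk from `a` to `b` using the listed edges, in order. -/
inductive Walk : G.V → G.V → List G.E → Prop
  | nil (v : G.V) : Walk v v []
  | cons {a b c : G.V} {e : G.E} {es : List G.E} :
      G.ends e = s(a, b) → Walk b c es → Walk a c (e :: es)

/-- `H` is a subgraph of `G`. -/
def IsSubgraphOf (H : FinMGraph) : Prop :=
  ∃ (φ : H.V ↪ G.V) (ψ : H.E ↪ G.E), ∀ e, G.ends (ψ e) = (H.ends e).map φ

/-- The edge-degree of `v`: the number of incident edges, counted with multiplicity. -/
noncomputable def edeg (v : G.V) : ℕ :=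
  Nat.card {e : G.E // v ∈ G.ends e}

/-- The vertex-degree of `v`: the number of distinct neighbours of `v`. -/
noncomputable def vdeg (v : G.V) : ℕ :=
  Nat.card {w : G.V // w ≠ v ∧ ∃ e : G.E, G.ends e = s(v, w)}

/-- `H` is obtained from `G` by contracting one edge `e = {x,y}` whose endpoints both
have vertex-degree two and edge-degree two. -/
def ContractStep (H : FinMGraph) : Prop :=
  ∃ (x y : G.V) (e : G.E), G.ends e = s(x, y) ∧
    G.vdeg x = 2 ∧ G.edeg x = 2 ∧ G.vdeg y = 2 ∧ G.edeg y = 2 ∧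
    ∃ (φ : G.V → H.V) (ψ : {f : G.E // f ≠ e} ≃ H.E),
      Function.Surjective φ ∧
      (∀ v w : G.V, φ v = φ w ↔ (v = w ∨ (v = x ∧ w = y) ∨ (v = y ∧ w = x))) ∧
      ∀ f : {f : G.E // f ≠ e}, H.ends (ψ f) = (G.ends f.1).map φ

/-- `H` is a weak topological minor of `G`: `H` is obtained from a subgraph of `G` by
repeatedly contracting edges whose endpoints have vertex-degree two and edge-degree two. -/
def IsWeakTopMinorOf (H G : FinMGraph) : Prop :=
  ∃ S : FinMGraph, S.IsSubgraphOf G ∧ Relation.ReflTransGen FinMGraph.ContractStep S H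

/-- The induced subgraph `G[S]` is connected. -/
def ConnectedOn (S : Set G.V) : Prop :=
  ∀ a ∈ S, ∀ b ∈ S, Relation.ReflTransGen (G.stepIn S) a b

/-- `G` is connected. -/
def Connected : Prop := G.ConnectedOn Set.univ

/-- `G` is biconnected: nonempty and removing any single vertex leaves it connected. -/
def Biconnected : Prop :=
  Nonempty G.V ∧ ∀ v : G.V, G.ConnectedOn {w | w ≠ v}

/-- The minimum cost over layouts whose first vertex is `u`. -/
noncomputable def etwFrom (u : G.V) : ℕ :=
  sInf {k | ∃ L : Fin (Fintype.card G.V) ≃ G.V, (L.symm u : ℕ) = 0 ∧ ∀ i, G.cost L i ≤ k}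

/-- The sub-multigraph of `G` on the same vertex set whose edges are those in `F`. -/
noncomputable def restrictE (F : Set G.E) : FinMGraph :=
  { V := G.V, E := {e : G.E // e ∈ F}, ends := fun e => G.ends e.1,
    loopless := fun e => G.loopless e.1 }

/-- Two edges lie in a common block: they are equal or some cycle contains both. -/
def SameBlock (e f : G.E) : Prop :=
  e = f ∨ ∃ (k : ℕ) (v : ZMod k → G.V) (g : ZMod k → G.E),
    G.IsCycleOn k v g ∧ e ∈ Set.range g ∧ f ∈ Set.range g

/-- The block of `G` containing the edge `e`. -/
noncomputable def blockOf (e : G.E) : FinMGraph :=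
  G.restrictE {f | G.SameBlock e f}

/-- The number of vertices outside `X` having a neighbour in `X`. -/
noncomputable def ncut (X : Set G.V) : ℕ :=
  Nat.card {v : G.V // v ∉ X ∧ ∃ x ∈ X, ∃ e : G.E, G.ends e = s(v, x)}

/-- Treewidth, via its layout characterization: the minimum over layouts of the
maximum of `|N_G(C_G(S_i, x_i))|`. -/
noncomputable def twl : ℕ :=
  sInf {k | ∃ L : Fin (Fintype.card G.V) ≃ G.V,
    ∀ i, G.ncut (G.comp (G.tail L i) (L i)) ≤ k}

/-- The maximum edge-degree of `G`. -/
noncomputable def maxEdeg : ℕ :=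
  sSup {m | ∃ v : G.V, m = G.edeg v}

end FinMGraph

/-- A tree-layout of `G`: a rooted tree (given by a parent function under which every
node eventually reaches the root) together with an injective mapping `τ` of the vertices
of `G` into the nodes such that the endpoints of every edge are mapped to comparable
(ancestor/descendant) nodes. -/
structure TreeLayout (G : FinMGraph) where
  T : Type
  par : T → T
  root : T
  par_root : par root = root
  reaches_root : ∀ t : T, ∃ n : ℕ, par^[n] t = root
  τ : G.V → T
  inj : Function.Injective τ
  comparable : ∀ (e : G.E) (a b : G.V), G.ends e = s(a, b) →
    (∃ n : ℕ, par^[n] (τ a) = τ b) ∨ (∃ n : ℕ, par^[n] (τ b) = τ a)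

/-- The set `X_T(u)` of vertices of `G` mapped to descendants of the node `u`. -/
def TreeLayout.region {G : FinMGraph} (TL : TreeLayout G) (u : TL.T) : Set G.V :=
  {x | ∃ n : ℕ, TL.par^[n] (TL.τ x) = u}

/-- The theta graph `θ k`: two vertices joined by `k` parallel edges. -/
def theta (k : ℕ) : FinMGraph :=
  { V := Fin 2, E := Fin k, ends := fun _ => s((0 : Fin 2), 1),
    loopless := fun _ => by rw [Sym2.mk_isDiag_iff]; decide }

/-- The cycle on `n ≥ 2` vertices. -/
def cyc (n : ℕ) (h : 2 ≤ n) : FinMGraph :=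
  letI : NeZero n := ⟨by omega⟩
  letI : Fact (1 < n) := ⟨h⟩
  { V := ZMod n, E := ZMod n, ends := fun i => s(i, i + 1),
    loopless := fun i => by
      rw [Sym2.mk_isDiag_iff]
      exact fun hh => one_ne_zero (left_eq_add.mp hh) }

/-- The multigraph `Z_n^3`, obtained from the cycle on `n ≥ 2` vertices by doubling
every edge. -/
def Z3 (n : ℕ) (h : 2 ≤ n) : FinMGraph :=
  letI : NeZero n := ⟨by omega⟩
  letI : Fact (1 < n) := ⟨h⟩
  { V := ZMod n, E := ZMod n × Fin 2, ends := fun p => s(p.1, p.1 + 1),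
    loopless := fun p => by
      rw [Sym2.mk_isDiag_iff]
      exact fun hh => one_ne_zero (left_eq_add.mp hh) }

namespace FinMGraph

variable {G : FinMGraph}

lemma stepIn_symm {S : Set G.V} : Symmetric (G.stepIn S) := by
  rintro a b ⟨ha, hb, f, hf⟩
  exact ⟨hb, ha, f, by rw [hf, Sym2.eq_swap]⟩

lemma mem_comp_self (S : Set G.V) (v : G.V) : v ∈ G.comp S v :=
  Relation.ReflTransGen.refl

lemma comp_subset {S : Set G.V} {v : G.V} (hv : v ∈ S) : G.comp S v ⊆ S := by
  intro w hw
  induction hw with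
  | refl => exact hv
  | tail _ h _ => exact h.2.1

lemma comp_closed {S : Set G.V} {u x y : G.V} (hx : x ∈ G.comp S u)
    (hxy : G.stepIn S x y) : y ∈ G.comp S u :=
  Relation.ReflTransGen.tail hx hxy

lemma comp_mono {S T : Set G.V} {u : G.V} (h : S ⊆ T) : G.comp S u ⊆ G.comp T u :=
  fun _ hw => Relation.ReflTransGen.mono (fun a b hab => ⟨h hab.1, h hab.2.1, hab.2.2⟩) _ _ hw

lemma comp_transfer {S T : Set G.V} {u : G.V} (hsub : G.comp S u ⊆ T) :
    ∀ w ∈ G.comp S u, Relation.ReflTransGen (G.stepIn T) u w := by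
  intro w hw
  induction hw with
  | refl => exact Relation.ReflTransGen.refl
  | @tail b c hb hstep ih =>
      exact Relation.ReflTransGen.tail ih
        ⟨hsub hb, hsub (Relation.ReflTransGen.tail hb hstep), hstep.2.2⟩

lemma comp_eq_of_mem {S : Set G.V} {u w : G.V} (h : w ∈ G.comp S u) :
    G.comp S w = G.comp S u := by
  ext z
  constructor
  · intro hz
    exact Relation.ReflTransGen.trans h hz
  · intro hz
    exact Relation.ReflTransGen.trans
      ((@Relation.ReflTransGen.symmetric _ _ ⟨fun _ _ hab => stepIn_symm hab⟩).symm _ _ h) hz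

lemma comp_subset_comp {S T : Set G.V} {u z : G.V} (hsub : G.comp S u ⊆ T)
    (hz : z ∈ G.comp S u) : G.comp S u ⊆ G.comp T z := by
  intro w hw
  exact Relation.ReflTransGen.trans
    ((@Relation.ReflTransGen.symmetric _ _ ⟨fun _ _ hab => stepIn_symm hab⟩).symm _ _ (comp_transfer hsub z hz))
    (comp_transfer hsub w hw)

end FinMGraph

namespace FinMGraph

variable {G : FinMGraph}

lemma val_cast_eq {m : ℕ} [NeZero m] (a : ZMod m) : ((a.val : ℕ) : ZMod m) = a := by
  simp [ZMod.natCast_val, ZMod.cast_id]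

lemma cycle_crossing {m : ℕ} {vs : ZMod m → G.V} {fs : ZMod m → G.E}
    (hcyc : G.IsCycleOn m vs fs) {W S' : Set G.V}
    (hcl : ∀ x y, x ∈ W → y ∈ S' → (∃ f : G.E, G.ends f = s(x, y)) → y ∈ W)
    (v0 : G.V) {p0 q : ZMod m} (hp0 : vs p0 ∈ W)
    (hq1 : vs q ∉ W) (hq2 : vs (q + 1) ∉ W) :
    ∃ (h : G.E) (x y : G.V), G.ends h = s(x, y) ∧ x ∈ W ∧ y ∉ S' ∧ y ≠ v0 := by
  classical
  obtain ⟨hm, hinj, -, hends⟩ := hcyc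
  haveI : NeZero m := ⟨by omega⟩
  have hqp : q ≠ p0 := fun h => hq1 (h ▸ hp0)
  set lq := (q - p0).val with hlq
  have hlqcast : p0 + ((lq : ℕ) : ZMod m) = q := by
    rw [hlq, val_cast_eq]; ring
  have hlq1 : 1 ≤ lq := by
    rcases Nat.eq_zero_or_pos lq with h | h
    · exfalso
      apply hqp
      have : q - p0 = 0 := by rwa [← ZMod.val_eq_zero]
      have h2 : q - p0 + p0 = 0 + p0 := by rw [this]
      simpa [sub_add_cancel] using h2
    · exact h
  have hlqm : lq ≤ m - 1 := by
    have := ZMod.val_lt (q - p0); omega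
  -- forward search
  have hPw : ∃ l : ℕ, vs (p0 + ((l + 1 : ℕ) : ZMod m)) ∉ W := by
    refine ⟨lq - 1, ?_⟩
    have : lq - 1 + 1 = lq := by omega
    rw [this, hlqcast]
    exact hq1
  set l1 := Nat.find hPw with hl1def
  have hl1 : vs (p0 + ((l1 + 1 : ℕ) : ZMod m)) ∉ W := Nat.find_spec hPw
  have hl1lq : l1 ≤ lq - 1 := Nat.find_min' hPw (by
    have : lq - 1 + 1 = lq := by omega
    rw [this, hlqcast]; exact hq1)
  have hmemF : ∀ t : ℕ, t ≤ l1 → vs (p0 + ((t : ℕ) : ZMod m)) ∈ W := by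
    intro t ht
    match t with
    | 0 => simpa using hp0
    | Nat.succ t' =>
        have := Nat.find_min hPw (show t' < l1 by omega)
        simpa using not_not.mp this
  -- backward search
  have hQw : ∃ l : ℕ, vs (p0 - ((l + 1 : ℕ) : ZMod m)) ∉ W := by
    refine ⟨m - lq - 1, ?_⟩
    have h1 : m - lq - 1 + 1 = m - lq := by omega
    rw [h1]
    have h2 : ((m - lq : ℕ) : ZMod m) = -((lq : ℕ) : ZMod m) := by
      have : ((m - lq : ℕ) : ZMod m) = ((m : ℕ) : ZMod m) - ((lq : ℕ) : ZMod m) := by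
        rw [Nat.cast_sub (by omega)]
      rw [this, ZMod.natCast_self]; ring
    rw [h2]
    have : p0 - -((lq : ℕ) : ZMod m) = p0 + ((lq : ℕ) : ZMod m) := by ring
    rw [this, hlqcast]
    exact hq1
  set l2 := Nat.find hQw with hl2def
  have hl2 : vs (p0 - ((l2 + 1 : ℕ) : ZMod m)) ∉ W := Nat.find_spec hQw
  have hl2bound : l2 ≤ m - lq - 1 := Nat.find_min' hQw (by
    have h1 : m - lq - 1 + 1 = m - lq := by omega
    rw [h1]
    have h2 : ((m - lq : ℕ) : ZMod m) = -((lq : ℕ) : ZMod m) := by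
      rw [Nat.cast_sub (by omega), ZMod.natCast_self]; ring
    rw [h2]
    have : p0 - -((lq : ℕ) : ZMod m) = p0 + ((lq : ℕ) : ZMod m) := by ring
    rw [this, hlqcast]
    exact hq1)
  have hmemB : ∀ t : ℕ, t ≤ l2 → vs (p0 - ((t : ℕ) : ZMod m)) ∈ W := by
    intro t ht
    match t with
    | 0 => simpa using hp0
    | Nat.succ t' =>
        have := Nat.find_min hQw (show t' < l2 by omega)
        simpa using not_not.mp this
  -- the two exit edges
  have hx1 : vs (p0 + ((l1 : ℕ) : ZMod m)) ∈ W := hmemF l1 le_rfl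
  have hx2 : vs (p0 - ((l2 : ℕ) : ZMod m)) ∈ W := hmemB l2 le_rfl
  have hedge1 : G.ends (fs (p0 + ((l1 : ℕ) : ZMod m))) =
      s(vs (p0 + ((l1 : ℕ) : ZMod m)), vs (p0 + ((l1 + 1 : ℕ) : ZMod m))) := by
    rw [hends]
    congr 2
    push_cast
    ring
  have hedge2 : G.ends (fs (p0 - ((l2 + 1 : ℕ) : ZMod m))) =
      s(vs (p0 - ((l2 : ℕ) : ZMod m)), vs (p0 - ((l2 + 1 : ℕ) : ZMod m))) := by
    rw [hends, Sym2.eq_swap]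
    congr 2
    push_cast
    ring
  have hy1S : vs (p0 + ((l1 + 1 : ℕ) : ZMod m)) ∉ S' := fun h =>
    hl1 (hcl _ _ hx1 h ⟨_, hedge1⟩)
  have hy2S : vs (p0 - ((l2 + 1 : ℕ) : ZMod m)) ∉ S' := fun h =>
    hl2 (hcl _ _ hx2 h ⟨_, hedge2⟩)
  by_cases hv1 : vs (p0 + ((l1 + 1 : ℕ) : ZMod m)) = v0
  · by_cases hv2 : vs (p0 - ((l2 + 1 : ℕ) : ZMod m)) = v0
    · -- contradiction
      exfalso
      have heq : p0 + ((l1 + 1 : ℕ) : ZMod m) = p0 - ((l2 + 1 : ℕ) : ZMod m) :=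
        hinj (hv1.trans hv2.symm)
      have hzero : (((l1 + 1) + (l2 + 1) : ℕ) : ZMod m) = 0 := by
        have : ((l1 + 1 : ℕ) : ZMod m) + ((l2 + 1 : ℕ) : ZMod m) = 0 := by
          have := heq
          push_cast at this ⊢
          linear_combination this
        push_cast at this ⊢
        linear_combination this
      have hdvd : m ∣ (l1 + 1) + (l2 + 1) := by
        rwa [ZMod.natCast_eq_zero_iff] at hzero
      have hsum : (l1 + 1) + (l2 + 1) = m := by
        have hle : (l1 + 1) + (l2 + 1) ≤ m := by omega
        have := Nat.le_of_dvd (by omega) hdvd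
        omega
      -- now q offset analysis
      rcases Nat.lt_or_ge lq (l1 + 2) with hcase | hcase
      · -- lq = l1 + 1, so q + 1 = p0 - l2
        have hlqeq : lq = l1 + 1 := by omega
        have : q + 1 = p0 - ((l2 : ℕ) : ZMod m) := by
          rw [← hlqcast, hlqeq]
          have hml2 : ((l2 : ℕ) : ZMod m) = -(((l1 + 1 + 1 : ℕ) : ZMod m)) := by
            have hc : ((l2 : ℕ) : ZMod m) + ((l1 + 1 + 1 : ℕ) : ZMod m) = 0 := by
              have : ((l2 + (l1 + 1 + 1) : ℕ) : ZMod m) = 0 := by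
                rw [show l2 + (l1 + 1 + 1) = (l1 + 1) + (l2 + 1) by omega]
                exact hzero
              push_cast at this ⊢
              linear_combination this
            linear_combination hc
          rw [hml2]
          push_cast
          ring
        rw [this] at hq2
        exact hq2 hx2
      · -- lq ≥ l1 + 2, so q = p0 - (m - lq) with m - lq ≤ l2
        have hmlq : m - lq ≤ l2 := by omega
        have : q = p0 - ((m - lq : ℕ) : ZMod m) := by
          rw [← hlqcast]
          have h2 : ((m - lq : ℕ) : ZMod m) = -((lq : ℕ) : ZMod m) := by
            rw [Nat.cast_sub (by omega), ZMod.natCast_self]; ring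
          rw [h2]
          ring
        rw [this] at hq1
        exact hq1 (hmemB _ hmlq)
    · exact ⟨_, _, _, hedge2, hx2, hy2S, hv2⟩
  · exact ⟨_, _, _, hedge1, hx1, hy1S, hv1⟩

end FinMGraph

namespace FinMGraph

lemma edeg_aux (G : FinMGraph) (e : G.E) (L : Fin (Fintype.card G.V) ≃ G.V) (k : ℕ)
    (hL : ∀ i, G.cost L i ≤ k) (v : G.V) :
    Nat.card {f : G.E // G.SameBlock e f ∧ v ∈ G.ends f} ≤ k * k + 2 * k := by
  classical
  set i := L.symm v with hi
  have hLi : L i = v := by rw [hi]; exact Equiv.apply_symm_apply L v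
  set S : Set G.V := G.tail L i with hS
  have hvS : v ∈ S := by
    show i ≤ L.symm v
    rw [hi]
  set C : Set G.V := G.comp S v with hC
  have hCS : C ⊆ S := comp_subset hvS
  have hcutC : G.cut C ≤ k := by
    have h := hL i
    unfold FinMGraph.cost at h
    rw [hLi] at h
    exact h
  set S' : Set G.V := {w | i < L.symm w} with hS'
  have hS'S : S' ⊆ S := by
    intro w hw
    show i ≤ L.symm w
    exact le_of_lt hw
  have hvS' : v ∉ S' := by
    show ¬ i < L.symm v
    rw [hi]
    exact lt_irrefl _
  have hSS' : ∀ w, w ∈ S → w ≠ v → w ∈ S' := by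
    intro w hw hwv
    have h1 : i ≤ L.symm w := hw
    rcases lt_or_eq_of_le h1 with h | h
    · exact h
    · exact absurd (L.symm.injective (h.symm.trans hi).symm ▸ rfl : w = v) hwv
  -- the edges at v in the block of e
  have hex : ∀ f : {f : G.E // G.SameBlock e f ∧ v ∈ G.ends f},
      ∃ u : G.V, G.ends f.1 = s(v, u) ∧ u ≠ v := by
    intro f
    obtain ⟨u, hu⟩ := Sym2.mem_iff_exists.mp f.2.2
    refine ⟨u, hu, ?_⟩
    rintro rfl
    exact G.loopless f.1 (by rw [hu]; exact Sym2.mk_isDiag_iff.mpr rfl)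
  choose u hu huv using hex
  have hsplit : Nat.card {f : G.E // G.SameBlock e f ∧ v ∈ G.ends f} =
      Nat.card {f : {f : G.E // G.SameBlock e f ∧ v ∈ G.ends f} // u f ∈ S'} +
      Nat.card {f : {f : G.E // G.SameBlock e f ∧ v ∈ G.ends f} // ¬ u f ∈ S'} := by
    rw [← Nat.card_sum]
    exact Nat.card_congr (Equiv.sumCompl _).symm
  -- components
  set K : {f : G.E // G.SameBlock e f ∧ v ∈ G.ends f} → Set G.V :=
    fun f => G.comp S' (u f) with hK
  have hTne : ∀ f, (Finset.univ.filter (fun j : Fin (Fintype.card G.V) => L j ∈ K f)).Nonempty := by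
    intro f
    exact ⟨L.symm (u f), by simp [hK, mem_comp_self]⟩
  set ρ : {f : G.E // G.SameBlock e f ∧ v ∈ G.ends f} → Fin (Fintype.card G.V) :=
    fun f => (Finset.univ.filter (fun j : Fin (Fintype.card G.V) => L j ∈ K f)).min' (hTne f) with hρ
  have hρK : ∀ f, L (ρ f) ∈ K f := by
    intro f
    have := Finset.min'_mem _ (hTne f)
    exact (Finset.mem_filter.mp this).2
  have hρle : ∀ f w, w ∈ K f → ρ f ≤ L.symm w := by
    intro f w hw
    exact Finset.min'_le _ _ (by simp [hw])
  -- facts for forward edges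
  have huC : ∀ f, u f ∈ S' → u f ∈ C :=
    fun f hf => comp_closed (mem_comp_self S v) ⟨hvS, hS'S hf, f.1, hu f⟩
  have hKC : ∀ f, u f ∈ S' → K f ⊆ C := by
    intro f hf
    have h1 : K f ⊆ G.comp S (u f) := comp_mono hS'S
    rwa [comp_eq_of_mem (huC f hf)] at h1
  have hKS' : ∀ f, u f ∈ S' → K f ⊆ S' := fun f hf => comp_subset hf
  have hiρ : ∀ f, u f ∈ S' → i < ρ f := by
    intro f hf
    have := hKS' f hf (hρK f)
    have h2 : i < L.symm (L (ρ f)) := this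
    rwa [Equiv.symm_apply_apply] at h2
  have hKD : ∀ f, u f ∈ S' → K f ⊆ G.comp (G.tail L (ρ f)) (L (ρ f)) := by
    intro f hf
    refine comp_subset_comp (fun w hw => ?_) (hρK f)
    exact hρle f w hw
  have hvD : ∀ f, u f ∈ S' → v ∉ G.comp (G.tail L (ρ f)) (L (ρ f)) := by
    intro f hf h
    have h1 : v ∈ G.tail L (ρ f) := comp_subset (show ρ f ≤ L.symm (L (ρ f)) by
      rw [Equiv.symm_apply_apply]) h
    have h2 : ρ f ≤ L.symm v := h1
    rw [← hi] at h2
    exact absurd (hiρ f hf) (not_lt.mpr h2)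
  -- forward count
  haveI : Finite ↥(Set.range (fun f : {f : {f : G.E // G.SameBlock e f ∧ v ∈ G.ends f} // u f ∈ S'} => ρ f.1)) :=
    Subtype.finite
  set J := Set.range (fun f : {f : {f : G.E // G.SameBlock e f ∧ v ∈ G.ends f} // u f ∈ S'} => ρ f.1) with hJ
  haveI : Fintype ↥J := Fintype.ofFinite _
  have hfwd : Nat.card {f : {f : G.E // G.SameBlock e f ∧ v ∈ G.ends f} // u f ∈ S'} ≤
      Nat.card ↥J * k := by
    set Φ : {f : {f : G.E // G.SameBlock e f ∧ v ∈ G.ends f} // u f ∈ S'} →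
        Σ j : ↥J, {h : G.E // ∃ a b, G.ends h = s(a, b) ∧
          a ∈ G.comp (G.tail L j.1) (L j.1) ∧ b ∉ G.comp (G.tail L j.1) (L j.1)} :=
      fun f => ⟨⟨ρ f.1, ⟨f, rfl⟩⟩,
        ⟨f.1.1, u f.1, v, by rw [hu f.1]; exact Sym2.eq_swap,
          hKD f.1 f.2 (mem_comp_self _ _), hvD f.1 f.2⟩⟩ with hΦ
    have hΦinj : Function.Injective Φ := by
      intro f g h
      have h2 : f.1.1 = g.1.1 := congrArg (fun x => x.2.1) h
      exact Subtype.ext (Subtype.ext h2)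
    calc Nat.card {f : {f : G.E // G.SameBlock e f ∧ v ∈ G.ends f} // u f ∈ S'}
        ≤ Nat.card (Σ j : ↥J, {h : G.E // ∃ a b, G.ends h = s(a, b) ∧
          a ∈ G.comp (G.tail L j.1) (L j.1) ∧ b ∉ G.comp (G.tail L j.1) (L j.1)}) :=
          Nat.card_le_card_of_injective Φ hΦinj
      _ = ∑ j : ↥J, Nat.card {h : G.E // ∃ a b, G.ends h = s(a, b) ∧
          a ∈ G.comp (G.tail L j.1) (L j.1) ∧ b ∉ G.comp (G.tail L j.1) (L j.1)} := by
          haveI : ∀ j : ↥J, Fintype {h : G.E // ∃ a b, G.ends h = s(a, b) ∧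
            a ∈ G.comp (G.tail L j.1) (L j.1) ∧ b ∉ G.comp (G.tail L j.1) (L j.1)} :=
            fun j => Fintype.ofFinite _
          rw [Nat.card_eq_fintype_card, Fintype.card_sigma]
          congr 1
          ext j
          rw [Nat.card_eq_fintype_card]
      _ ≤ ∑ _j : ↥J, k := Finset.sum_le_sum (fun j _ => hL j.1)
      _ = Nat.card ↥J * k := by
          rw [Finset.sum_const, Finset.card_univ, Nat.card_eq_fintype_card, smul_eq_mul]

  -- j is determined by its component
  have hjdet : ∀ j j' : ↥J, G.comp S' (L j.1) = G.comp S' (L j'.1) → j = j' := by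
    intro j j' hcomp
    obtain ⟨f, hf⟩ := j.2
    obtain ⟨f', hf'⟩ := j'.2
    replace hf : ρ f.1 = j.1 := hf
    replace hf' : ρ f'.1 = j'.1 := hf'
    have h1 : K f.1 = G.comp S' (L j.1) := by
      rw [← hf]; exact (comp_eq_of_mem (hρK f.1)).symm
    have h1' : K f'.1 = G.comp S' (L j'.1) := by
      rw [← hf']; exact (comp_eq_of_mem (hρK f'.1)).symm
    have hle : j.1 ≤ j'.1 := by
      have hm : L j'.1 ∈ K f.1 := by rw [h1, hcomp]; exact mem_comp_self _ _
      have h2 := hρle f.1 _ hm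
      rw [hf, Equiv.symm_apply_apply] at h2
      exact h2
    have hle' : j'.1 ≤ j.1 := by
      have hm : L j.1 ∈ K f'.1 := by rw [h1', ← hcomp]; exact mem_comp_self _ _
      have h2 := hρle f'.1 _ hm
      rw [hf', Equiv.symm_apply_apply] at h2
      exact h2
    exact Subtype.ext (le_antisymm hle hle')
  -- split J into exceptional and non-exceptional groups
  haveI : DecidablePred (fun j : ↥J => ∃ c, c ∈ G.ends e ∧ c ∈ G.comp S' (L j.1)) :=
    fun _ => Classical.propDecidable _
  have hgsplit : Nat.card ↥J =
      Nat.card {j : ↥J // ∃ c, c ∈ G.ends e ∧ c ∈ G.comp S' (L j.1)} +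
      Nat.card {j : ↥J // ¬ ∃ c, c ∈ G.ends e ∧ c ∈ G.comp S' (L j.1)} := by
    rw [← Nat.card_sum]
    exact Nat.card_congr (Equiv.sumCompl _).symm
  -- at most two exceptional groups
  have hexc2 : Nat.card {j : ↥J // ∃ c, c ∈ G.ends e ∧ c ∈ G.comp S' (L j.1)} ≤ 2 := by
    obtain ⟨a, b, hab⟩ : ∃ a b, G.ends e = s(a, b) :=
      Sym2.ind (fun x y => ⟨x, y, rfl⟩) (G.ends e)
    have hne : a ≠ b := fun h => G.loopless e (by rw [hab, h]; exact Sym2.mk_isDiag_iff.mpr rfl)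
    have hch : ∀ j : {j : ↥J // ∃ c, c ∈ G.ends e ∧ c ∈ G.comp S' (L j.1)},
        ∃ c, c ∈ G.ends e ∧ c ∈ G.comp S' (L j.1.1) := fun j => j.2
    choose c hc1 hc2 using hch
    have hmem : ∀ j, c j = a ∨ c j = b := by
      intro j
      have h := hc1 j
      rw [hab, Sym2.mem_iff] at h
      exact h
    have hinj : Function.Injective
        (fun j : {j : ↥J // ∃ c, c ∈ G.ends e ∧ c ∈ G.comp S' (L j.1)} =>
          @decide (c j = a) (Classical.propDecidable _)) := by
      intro j j' h
      have h' : @decide (c j = a) (Classical.propDecidable _) =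
          @decide (c j' = a) (Classical.propDecidable _) := h
      have hiff : (c j = a) ↔ (c j' = a) := decide_eq_decide.mp h'
      have hcc : c j = c j' := by
        rcases hmem j with h1 | h1
        · exact h1.trans (hiff.mp h1).symm
        · rcases hmem j' with h2 | h2
          · exact absurd (hiff.mpr h2) (by rw [h1]; exact fun hba => hne hba.symm)
          · exact h1.trans h2.symm
      have e1 : G.comp S' (c j) = G.comp S' (L j.1.1) := comp_eq_of_mem (hc2 j)
      have e2 : G.comp S' (c j') = G.comp S' (L j'.1.1) := comp_eq_of_mem (hc2 j')
      exact Subtype.ext (hjdet j.1 j'.1 (by rw [← e1, ← e2, hcc]))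
    calc Nat.card {j : ↥J // ∃ c, c ∈ G.ends e ∧ c ∈ G.comp S' (L j.1)}
        ≤ Nat.card Bool := Nat.card_le_card_of_injective _ hinj
      _ = 2 := by rw [Nat.card_eq_fintype_card, Fintype.card_bool]
  -- crossing edges for non-exceptional groups
  have hcross : ∀ j : {j : ↥J // ¬ ∃ c, c ∈ G.ends e ∧ c ∈ G.comp S' (L j.1)},
      ∃ (h : G.E) (x y : G.V), G.ends h = s(x, y) ∧ x ∈ G.comp S' (L j.1.1) ∧
        x ∈ C ∧ x ∈ S' ∧ y ∉ S := by
    intro j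
    obtain ⟨f, hf⟩ := j.1.2
    replace hf : ρ f.1 = j.1.1 := hf
    have hKW : G.comp S' (L j.1.1) = K f.1 := by
      rw [← hf]; exact comp_eq_of_mem (hρK f.1)
    have hLjS' : L j.1.1 ∈ S' := by
      rw [← hf]; exact hKS' f.1 f.2 (hρK f.1)
    have hcl : ∀ x y, x ∈ G.comp S' (L j.1.1) → y ∈ S' →
        (∃ g : G.E, G.ends g = s(x, y)) → y ∈ G.comp S' (L j.1.1) := by
      rintro x y hx hy ⟨g, hg⟩
      exact comp_closed hx ⟨comp_subset hLjS' hx, hy, g, hg⟩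
    have huW : u f.1 ∈ G.comp S' (L j.1.1) := by
      rw [hKW]; exact mem_comp_self _ _
    rcases f.1.2.1 with heq | ⟨mC, vsC, fsC, hcyc, ⟨qe, hqe⟩, ⟨mf, hmf⟩⟩
    · refine absurd ⟨u f.1, ?_, huW⟩ j.2
      have hee : G.ends e = G.ends f.1.1 := congrArg G.ends heq
      rw [hee, hu f.1]
      exact Sym2.mem_mk_right _ _
    · have hendsf : s(vsC mf, vsC (mf + 1)) = s(v, u f.1) := by
        rw [← hcyc.2.2.2 mf, hmf, hu f.1]
      have humem : u f.1 ∈ s(vsC mf, vsC (mf + 1)) := by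
        rw [hendsf]; exact Sym2.mem_mk_right _ _
      rw [Sym2.mem_iff] at humem
      obtain ⟨p0, hp0⟩ : ∃ p0, vsC p0 = u f.1 := by
        rcases humem with h1 | h1
        · exact ⟨mf, h1.symm⟩
        · exact ⟨mf + 1, h1.symm⟩
      have hp0W : vsC p0 ∈ G.comp S' (L j.1.1) := by rw [hp0]; exact huW
      have hqe' : G.ends e = s(vsC qe, vsC (qe + 1)) := by
        rw [← hqe]; exact hcyc.2.2.2 qe
      have hq1 : vsC qe ∉ G.comp S' (L j.1.1) := fun h =>
        j.2 ⟨vsC qe, by rw [hqe']; exact Sym2.mem_mk_left _ _, h⟩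
      have hq2 : vsC (qe + 1) ∉ G.comp S' (L j.1.1) := fun h =>
        j.2 ⟨vsC (qe + 1), by rw [hqe']; exact Sym2.mem_mk_right _ _, h⟩
      obtain ⟨h, x, y, hh, hxW, hyS', hyv⟩ := cycle_crossing hcyc hcl v hp0W hq1 hq2
      have hxS' : x ∈ S' := comp_subset hLjS' hxW
      refine ⟨h, x, y, hh, hxW, ?_, hxS', fun hy => hyS' (hSS' y hy hyv)⟩
      have : x ∈ K f.1 := by rw [← hKW]; exact hxW
      exact hKC f.1 f.2 this
  choose ch cx cy hch hcx1 hcx2 hcx3 hcy using hcross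
  -- the master injection into the cut of C
  set Ψ : ({f : {f : G.E // G.SameBlock e f ∧ v ∈ G.ends f} // ¬ u f ∈ S'} ⊕
      {j : ↥J // ¬ ∃ c, c ∈ G.ends e ∧ c ∈ G.comp S' (L j.1)}) →
      {h : G.E // ∃ a b, G.ends h = s(a, b) ∧ a ∈ C ∧ b ∉ C} :=
    Sum.elim
      (fun f => ⟨f.1.1, v, u f.1, hu f.1, mem_comp_self _ _, fun hc =>
        f.2 (hSS' _ (hCS hc) (huv f.1))⟩)
      (fun j => ⟨ch j, cx j, cy j, hch j, hcx2 j, fun hc => hcy j (hCS hc)⟩) with hΨ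
  have hΨinj : Function.Injective Ψ := by
    rintro (f | j) (f' | j') h
    · have h1 : (Ψ (Sum.inl f)).1 = (Ψ (Sum.inl f')).1 := congrArg Subtype.val h
      have h2 : f.1.1 = f'.1.1 := h1
      exact congrArg Sum.inl (Subtype.ext (Subtype.ext h2))
    · exfalso
      have h1 : (Ψ (Sum.inl f)).1 = (Ψ (Sum.inr j')).1 := congrArg Subtype.val h
      have h2 : f.1.1 = ch j' := h1
      have hv : v ∈ G.ends (ch j') := by
        rw [← h2, hu f.1]; exact Sym2.mem_mk_left _ _
      rw [hch j', Sym2.mem_iff] at hv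
      rcases hv with hv | hv
      · exact hvS' (hv ▸ hcx3 j')
      · exact hcy j' (hv ▸ hvS)
    · exfalso
      have h1 : (Ψ (Sum.inr j)).1 = (Ψ (Sum.inl f')).1 := congrArg Subtype.val h
      have h2 : f'.1.1 = ch j := h1.symm
      have hv : v ∈ G.ends (ch j) := by
        rw [← h2, hu f'.1]; exact Sym2.mem_mk_left _ _
      rw [hch j, Sym2.mem_iff] at hv
      rcases hv with hv | hv
      · exact hvS' (hv ▸ hcx3 j)
      · exact hcy j (hv ▸ hvS)
    · have h1 : (Ψ (Sum.inr j)).1 = (Ψ (Sum.inr j')).1 := congrArg Subtype.val h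
      have h2 : ch j = ch j' := h1
      have hss : s(cx j, cy j) = s(cx j', cy j') := by
        rw [← hch j, ← hch j', h2]
      rw [Sym2.eq_iff] at hss
      rcases hss with ⟨hx, _⟩ | ⟨hx, hy⟩
      · have e1 : G.comp S' (cx j) = G.comp S' (L j.1.1) := comp_eq_of_mem (hcx1 j)
        have e2 : G.comp S' (cx j') = G.comp S' (L j'.1.1) := comp_eq_of_mem (hcx1 j')
        exact congrArg Sum.inr (Subtype.ext (hjdet j.1 j'.1 (by rw [← e1, ← e2, hx])))
      · exfalso
        exact hcy j' (hx ▸ hS'S (hcx3 j))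
  have hback : Nat.card {f : {f : G.E // G.SameBlock e f ∧ v ∈ G.ends f} // ¬ u f ∈ S'} +
      Nat.card {j : ↥J // ¬ ∃ c, c ∈ G.ends e ∧ c ∈ G.comp S' (L j.1)} ≤ k := by
    rw [← Nat.card_sum]
    calc Nat.card _ ≤ Nat.card {h : G.E // ∃ a b, G.ends h = s(a, b) ∧ a ∈ C ∧ b ∉ C} :=
          Nat.card_le_card_of_injective Ψ hΨinj
      _ ≤ k := hcutC
  -- final arithmetic
  rw [hsplit]
  set A := Nat.card {f : {f : G.E // G.SameBlock e f ∧ v ∈ G.ends f} // ¬ u f ∈ S'} with hA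
  set Wd := Nat.card {f : {f : G.E // G.SameBlock e f ∧ v ∈ G.ends f} // u f ∈ S'} with hWdd
  set gE := Nat.card {j : ↥J // ∃ c, c ∈ G.ends e ∧ c ∈ G.comp S' (L j.1)} with hgE
  set gN := Nat.card {j : ↥J // ¬ ∃ c, c ∈ G.ends e ∧ c ∈ G.comp S' (L j.1)} with hgN
  rcases Nat.eq_zero_or_pos k with hk | hk
  · have h1 : Wd = 0 := by
      have := hfwd
      rw [hk] at this
      omega
    have h2 : A = 0 := by
      have := hback
      rw [hk] at this
      omega
    rw [h1, h2, hk]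
  · have t1 : (A + gN) * k ≤ k * k := Nat.mul_le_mul_right k hback
    have t2 : A ≤ A * k := Nat.le_mul_of_pos_right A hk
    have t3 : Wd ≤ (gE + gN) * k := by rw [← hgsplit]; exact hfwd
    have t5 : gE * k ≤ 2 * k := Nat.mul_le_mul_right k hexc2
    have t4 : (gE + gN) * k = gE * k + gN * k := by ring
    have t6 : (A + gN) * k = A * k + gN * k := by ring
    omega

end FinMGraph

namespace FinMGraph

lemma maxEdeg_blockOf_le (G : FinMGraph) (e : G.E) (L : Fin (Fintype.card G.V) ≃ G.V)
    (k : ℕ) (hL : ∀ i, G.cost L i ≤ k) :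
    (G.blockOf e).maxEdeg ≤ k * k + 2 * k := by
  apply csSup_le'
  rintro m ⟨w, rfl⟩
  have hequiv : {f : (G.blockOf e).E // w ∈ (G.blockOf e).ends f} ≃
      {f : G.E // G.SameBlock e f ∧ w ∈ G.ends f} :=
    ⟨fun x => ⟨x.1.1, x.1.2, x.2⟩, fun x => ⟨⟨x.1, x.2.1⟩, x.2.2⟩,
      fun _ => rfl, fun _ => rfl⟩
  have : (G.blockOf e).edeg w = Nat.card {f : G.E // G.SameBlock e f ∧ w ∈ G.ends f} :=
    Nat.card_congr hequiv
  rw [this]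
  exact edeg_aux G e L k hL w

lemma twl_restrictE_le (G : FinMGraph) (F : Set G.E) (L : Fin (Fintype.card G.V) ≃ G.V)
    (k : ℕ) (hL : ∀ i, G.cost L i ≤ k) :
    (G.restrictE F).twl ≤ k := by
  apply Nat.sInf_le
  refine ⟨L, ?_⟩
  intro i
  have hXC : (G.restrictE F).comp ((G.restrictE F).tail L i) (L i) ⊆
      G.comp (G.tail L i) (L i) := by
    intro w hw
    refine Relation.ReflTransGen.mono ?_ _ _ hw
    rintro a b ⟨ha, hb, f, hf⟩
    exact ⟨ha, hb, f.1, hf⟩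
  have hitail : (i : Fin (Fintype.card G.V)) ≤ L.symm (L i) := by
    exact (L.symm_apply_apply i).ge
  have hCGtail : G.comp (G.tail L i) (L i) ⊆ G.tail L i := comp_subset hitail
  have hexw : ∀ w : {w : (G.restrictE F).V //
      w ∉ (G.restrictE F).comp ((G.restrictE F).tail L i) (L i) ∧
      ∃ x ∈ (G.restrictE F).comp ((G.restrictE F).tail L i) (L i),
        ∃ f : (G.restrictE F).E, (G.restrictE F).ends f = s(w, x)},
      ∃ f : G.E, ∃ x : G.V, G.ends f = s(x, w.1) ∧ x ∈ G.comp (G.tail L i) (L i) ∧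
        (w.1 : G.V) ∉ G.tail L i := by
    intro w
    obtain ⟨hwX, x, hxX, f, hf⟩ := w.2
    have hf' : G.ends f.1 = s(w.1, x) := hf
    have hwtail : (w.1 : G.V) ∉ (G.restrictE F).tail L i := by
      intro hw
      apply hwX
      refine FinMGraph.comp_closed hxX ⟨?_, hw, f, ?_⟩
      · exact FinMGraph.comp_subset hitail hxX
      · rw [hf, Sym2.eq_swap]
    exact ⟨f.1, x, by rw [hf']; exact Sym2.eq_swap, hXC hxX, hwtail⟩
  choose cf cx hcf hcx hcw using hexw
  have hinj : Function.Injective (fun w => (⟨cf w, cx w, w.1, hcf w, hcx w,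
      fun hc => hcw w (hCGtail hc)⟩ :
      {h : G.E // ∃ a b, G.ends h = s(a, b) ∧ a ∈ G.comp (G.tail L i) (L i) ∧
        b ∉ G.comp (G.tail L i) (L i)})) := by
    intro w w' h
    have h1 : cf w = cf w' := congrArg Subtype.val h
    have h2 : s(cx w, (w.1 : G.V)) = s(cx w', (w'.1 : G.V)) := by
      rw [← hcf w, ← hcf w', h1]
    replace h2 := Sym2.eq_iff.mp h2
    rcases h2 with ⟨_, h3⟩ | ⟨h3, h4⟩
    · exact Subtype.ext h3
    · exact absurd (hCGtail (hcx w')) (h4 ▸ hcw w)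
  exact Nat.le_trans (Nat.card_le_card_of_injective _ hinj) (hL i)

end FinMGraph


/-- For every graph `G`, `√(p(G)) ≤ etw(G)`, where
`p(G) = max over blocks B of G of max(Δ_e(B), tw(B))`. -/
theorem sqrt_blockParam_le_etw (G : FinMGraph) :
    Nat.sqrt (sSup {m | ∃ e : G.E, m = max (G.blockOf e).maxEdeg (G.blockOf e).twl}) ≤
      G.etw := by
  classical
  have hne : {k | ∃ L : Fin (Fintype.card G.V) ≃ G.V, ∀ i, G.cost L i ≤ k}.Nonempty := by
    refine ⟨Finset.univ.sup (G.cost (Fintype.equivFin G.V).symm),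
      (Fintype.equivFin G.V).symm, fun i => Finset.le_sup (Finset.mem_univ i)⟩
  obtain ⟨L, hL⟩ : ∃ L : Fin (Fintype.card G.V) ≃ G.V, ∀ i, G.cost L i ≤ G.etw :=
    Nat.sInf_mem hne
  set k := G.etw with hk
  have hsup : sSup {m | ∃ e : G.E, m = max (G.blockOf e).maxEdeg (G.blockOf e).twl} ≤
      k * k + 2 * k := by
    apply csSup_le'
    rintro m ⟨e, rfl⟩
    apply max_le
    · exact FinMGraph.maxEdeg_blockOf_le G e L k hL
    · have h1 : (G.blockOf e).twl ≤ k :=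
        FinMGraph.twl_restrictE_le G {f | G.SameBlock e f} L k hL
      have h2 : k ≤ k * k + 2 * k := by nlinarith
      omega
  refine (Nat.sqrt_le_sqrt hsup).trans ?_
  have h3 : k * k + 2 * k < (k + 1) * (k + 1) := by nlinarith
  exact Nat.lt_succ_iff.mp (Nat.sqrt_lt.mpr h3)
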